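/- For every natural number i, the linear complexity of the binomial sequence n ↦ C(n, i) mod 2 equals i + 1; precisely: (a) the sequence satisfies the linear recurrence of order i + 1 given by Σ_{j=0}^{i+1} (C(i+1, j) mod 2) · (C(n + j, i) mod 2) = 0 in ZMod 2 for all n; and (b) for every m ≤ i and every choice of coefficients a_0, …, a_{m−1} ∈ ZMod 2 there exists n such that C(n + m, i) mod 2 ≠ Σ_{j=0}^{m−1} a_j · (C(n + j, i) mod 2), i.e., the sequence satisfies no linear recurrence of order m ≤ i. -/
import Mathlib

lemma binom_key (i : ℕ) (n : ℕ) :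
    ∑ j ∈ Finset.range (i + 2), ((i + 1).choose j : ZMod 2) * ((n + j).choose i : ZMod 2) = 0 := by
  induction i generalizing n with
  | zero =>
    simp [Finset.sum_range_succ]
    decide
  | succ i ih =>
    set g : ℕ → ZMod 2 := fun j => ((i + 1).choose j : ZMod 2) * ((n + j).choose (i + 1) : ZMod 2)
      with hgdef
    have hgsum : ∑ j ∈ Finset.range (i + 2), g (j + 1) + g 0 = ∑ j ∈ Finset.range (i + 2), g j := by
      rw [← Finset.sum_range_succ' g (i + 2), Finset.sum_range_succ]
      have hz : g (i + 2) = 0 := by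
        simp [hgdef, Nat.choose_eq_zero_of_lt (by omega : i + 1 < i + 2)]
      rw [hz, add_zero]
    have h1 : ∀ j ∈ Finset.range (i + 2),
        ((i + 1 + 1).choose (j + 1) : ZMod 2) * ((n + (j + 1)).choose (i + 1) : ZMod 2)
        = ((i + 1).choose j : ZMod 2) * ((n + j).choose i : ZMod 2) + g j + g (j + 1) := by
      intro j _
      simp only [hgdef]
      rw [Nat.choose_succ_succ (i + 1) j, show n + (j + 1) = (n + j) + 1 from by omega,
        Nat.choose_succ_succ (n + j) i]
      push_cast
      ring
    rw [Finset.sum_range_succ', Finset.sum_congr rfl h1, Finset.sum_add_distrib,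
      Finset.sum_add_distrib, ih n, zero_add]
    have hf0 : ((i + 1 + 1).choose 0 : ZMod 2) * ((n + 0).choose (i + 1) : ZMod 2) = g 0 := by
      simp [hgdef]
    rw [hf0, add_assoc, hgsum, CharTwo.add_self_eq_zero]

theorem binomial_sequence_linear_complexity (i : ℕ) :
    (∀ n : ℕ,
      ∑ j ∈ Finset.range (i + 2), ((i + 1).choose j : ZMod 2) * ((n + j).choose i : ZMod 2)
        = 0) ∧
    (∀ m ≤ i, ∀ a : ℕ → ZMod 2, ∃ n : ℕ,
      ((n + m).choose i : ZMod 2) ≠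
        ∑ j ∈ Finset.range m, a j * ((n + j).choose i : ZMod 2)) := by
  constructor
  · exact binom_key i
  · intro m hm a
    refine ⟨i - m, ?_⟩
    have h1 : i - m + m = i := Nat.sub_add_cancel hm
    have h2 : ∀ j ∈ Finset.range m, a j * ((i - m + j).choose i : ZMod 2) = 0 := by
      intro j hj
      rw [Finset.mem_range] at hj
      rw [Nat.choose_eq_zero_of_lt (by omega)]
      simp
    rw [h1, Nat.choose_self, Finset.sum_congr rfl h2]
    simp
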